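/- Let P be a finite poset on [n] and ε ∈ {−1,1}^n. The intersection E_P ∩ O_ε of the enriched chain polytope with the closed orthant O_ε is unimodularly equivalent to the chain polytope C_P of P; explicitly, the linear map x ↦ (ε_1 x_1, ..., ε_n x_n) maps C_P bijectively onto E_P ∩ O_ε. -/

import Mathlib

/-- `A` is an antichain of the poset `(Fin n, r)`. -/
def IsAntichainIn {n : ℕ} (r : Fin n → Fin n → Prop) (A : Set (Fin n)) : Prop :=
  ∀ i ∈ A, ∀ j ∈ A, i ≠ j → ¬ r i j ∧ ¬ r j i

/-- The set `E(P)` of signed indicator vectors of antichains of `P`. -/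
def signedAntichainVectors {n : ℕ} (r : Fin n → Fin n → Prop) : Set (Fin n → ℝ) :=
  {x | (∀ i, x i = 0 ∨ x i = 1 ∨ x i = -1) ∧ IsAntichainIn r {i | x i ≠ 0}}

/-- The enriched chain polytope `E_P`. -/
def enrichedChainPolytope {n : ℕ} (r : Fin n → Fin n → Prop) : Set (Fin n → ℝ) :=
  convexHull ℝ (signedAntichainVectors r)


/-- The closed orthant determined by a sign vector `ε`. -/
def orthant {n : ℕ} (ε : Fin n → ℝ) : Set (Fin n → ℝ) :=
  {x | ∀ i, 0 ≤ ε i * x i}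

/-- The chain polytope `C_P`: the convex hull of indicator vectors of antichains. -/
def chainPolytope {n : ℕ} (r : Fin n → Fin n → Prop) : Set (Fin n → ℝ) :=
  convexHull ℝ {x | (∀ i, x i = 0 ∨ x i = 1) ∧ IsAntichainIn r {i | x i ≠ 0}}

/-- Coordinatewise multiplication as a linear map. -/
def mulPi {n : ℕ} (c : Fin n → ℝ) : (Fin n → ℝ) →ₗ[ℝ] (Fin n → ℝ) where
  toFun x := fun i => c i * x i
  map_add' x y := by funext i; simp [Pi.add_apply]; ring
  map_smul' a x := by funext i; simp [Pi.smul_apply, smul_eq_mul]; ring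

lemma IsAntichainIn.subset {n : ℕ} {r : Fin n → Fin n → Prop} {A B : Set (Fin n)}
    (h : IsAntichainIn r A) (hBA : B ⊆ A) : IsAntichainIn r B :=
  fun i hi j hj hij => h i (hBA hi) j (hBA hj) hij

/-- nonnegativity of the chain polytope -/
lemma chainPolytope_nonneg {n : ℕ} {r : Fin n → Fin n → Prop} {x : Fin n → ℝ}
    (hx : x ∈ chainPolytope r) (i : Fin n) : 0 ≤ x i := by
  have hconv : Convex ℝ {y : Fin n → ℝ | ∀ j, 0 ≤ y j} := by
    intro a ha b hb s t hs ht hst j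
    have := ha j; have := hb j
    have : 0 ≤ s * a j + t * b j := by positivity
    simpa using this
  have hsub : {x : Fin n → ℝ | (∀ i, x i = 0 ∨ x i = 1) ∧ IsAntichainIn r {i | x i ≠ 0}}
      ⊆ {y : Fin n → ℝ | ∀ j, 0 ≤ y j} := by
    rintro y ⟨hy, -⟩ j
    rcases hy j with h | h <;> simp [h]
  exact convexHull_min hsub hconv hx i

/-- Zeroing out one coordinate preserves the chain polytope. -/
lemma chainPolytope_zero_coord {n : ℕ} {r : Fin n → Fin n → Prop} {x : Fin n → ℝ}
    (hx : x ∈ chainPolytope r) (k : Fin n) :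
    (fun i => if i = k then 0 else x i) ∈ chainPolytope r := by
  set c : Fin n → ℝ := fun i => if i = k then 0 else 1 with hc
  have hmem : mulPi c x ∈ (mulPi c) '' (chainPolytope r) := ⟨x, hx, rfl⟩
  rw [chainPolytope, LinearMap.image_convexHull] at hmem
  have hsub : (mulPi c) '' {x : Fin n → ℝ | (∀ i, x i = 0 ∨ x i = 1) ∧
      IsAntichainIn r {i | x i ≠ 0}} ⊆
      {x : Fin n → ℝ | (∀ i, x i = 0 ∨ x i = 1) ∧ IsAntichainIn r {i | x i ≠ 0}} := by
    rintro y ⟨v, ⟨hv01, hvA⟩, rfl⟩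
    constructor
    · intro i
      rcases hv01 i with h | h <;> by_cases hik : i = k <;>
        simp [mulPi, hc, hik, h]
    · refine hvA.subset ?_
      intro i hi
      simp only [Set.mem_setOf_eq, mulPi, LinearMap.coe_mk, AddHom.coe_mk] at hi ⊢
      intro h; exact hi (by simp [h])
  have : mulPi c x ∈ chainPolytope r := convexHull_mono hsub hmem
  convert this using 1
  funext i
  by_cases hik : i = k <;> simp [mulPi, hc, hik]

/-- Lowering one coordinate. -/
lemma chainPolytope_lower_coord {n : ℕ} {r : Fin n → Fin n → Prop} {x : Fin n → ℝ}
    (hx : x ∈ chainPolytope r) (k : Fin n) {c : ℝ} (hc0 : 0 ≤ c) (hck : c ≤ x k) :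
    (fun i => if i = k then c else x i) ∈ chainPolytope r := by
  have hz := chainPolytope_zero_coord hx k
  rcases eq_or_lt_of_le hc0 with h0 | h0
  · convert hz using 2 with i
    simp [← h0]
  · have hxk : 0 < x k := lt_of_lt_of_le h0 hck
    set t : ℝ := c / x k with ht
    have ht0 : 0 ≤ t := by positivity
    have ht1 : t ≤ 1 := by
      rw [ht, div_le_one hxk]; exact hck
    have := (convex_convexHull ℝ _) hx hz ht0 (by linarith : (0:ℝ) ≤ 1 - t) (by ring)
    have h2 : (t • x + (1 - t) • fun i => if i = k then (0:ℝ) else x i) ∈ chainPolytope r := this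
    convert h2 using 1
    funext i
    simp only [Pi.add_apply, Pi.smul_apply, smul_eq_mul]
    by_cases hik : i = k
    · rw [if_pos hik, if_pos hik, hik]
      simp only [mul_zero, add_zero]
      rw [ht, div_mul_cancel₀ _ (ne_of_gt hxk)]
    · rw [if_neg hik, if_neg hik]; ring

/-- Down-closedness within the nonneg orthant. -/
lemma chainPolytope_downclosed {n : ℕ} {r : Fin n → Fin n → Prop} {y z : Fin n → ℝ}
    (hz : z ∈ chainPolytope r) (hy0 : ∀ i, 0 ≤ y i) (hyz : ∀ i, y i ≤ z i) :
    y ∈ chainPolytope r := by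
  have key : ∀ S : Finset (Fin n), (fun i => if i ∈ S then y i else z i) ∈ chainPolytope r := by
    intro S
    induction S using Finset.induction_on with
    | empty => simpa using hz
    | @insert k S hkS ih =>
        have step := chainPolytope_lower_coord ih k (hy0 k)
          (by simp [hkS]; exact hyz k)
        convert step using 2 with i
        by_cases hik : i = k
        · simp [hik]
        · by_cases hiS : i ∈ S <;> simp [hik, hiS]
  have := key Finset.univ
  simpa using this

/-- Every point of the enriched chain polytope is coordinatewise-abs dominated by a
point of the chain polytope. -/
lemma exists_dominating {n : ℕ} {r : Fin n → Fin n → Prop} {y : Fin n → ℝ}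
    (hy : y ∈ enrichedChainPolytope r) :
    ∃ z ∈ chainPolytope r, ∀ i, |y i| ≤ z i := by
  rw [enrichedChainPolytope, convexHull_eq] at hy
  obtain ⟨ι, t, w, zf, hw0, hw1, hzS, hcm⟩ := hy
  rw [Finset.centerMass_eq_of_sum_1 _ _ hw1] at hcm
  refine ⟨∑ i ∈ t, w i • (fun j => |zf i j|), ?_, ?_⟩
  · refine (convex_convexHull ℝ _).sum_mem hw0 hw1 ?_
    intro i hi
    refine subset_convexHull ℝ _ ?_
    obtain ⟨hv, hA⟩ := hzS i hi
    constructor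
    · intro j
      rcases hv j with h | h | h <;> simp [h]
    · refine hA.subset ?_
      intro j hj
      simp only [Set.mem_setOf_eq, abs_ne_zero] at hj ⊢
      exact hj
  · intro j
    rw [← hcm]
    simp only [Finset.sum_apply, Pi.smul_apply, smul_eq_mul]
    calc |∑ i ∈ t, w i * zf i j| ≤ ∑ i ∈ t, |w i * zf i j| := Finset.abs_sum_le_sum_abs _ _
      _ = ∑ i ∈ t, w i * |zf i j| := by
          refine Finset.sum_congr rfl fun i hi => ?_
          rw [abs_mul, abs_of_nonneg (hw0 i hi)]

theorem enrichedChainPolytope_inter_orthant_unimodular {n : ℕ} (r : Fin n → Fin n → Prop)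
    (hr : IsPartialOrder (Fin n) r) (ε : Fin n → ℝ) (hε : ∀ i, ε i = 1 ∨ ε i = -1) :
    Set.BijOn (fun x i => ε i * x i) (chainPolytope r)
      (enrichedChainPolytope r ∩ orthant ε) := by
  have hεsq : ∀ i, ε i * ε i = 1 := by
    intro i; rcases hε i with h | h <;> simp [h]
  have hεne : ∀ i, ε i ≠ 0 := by
    intro i; rcases hε i with h | h <;> simp [h]
  refine ⟨?_, ?_, ?_⟩
  · -- MapsTo
    intro x hx
    constructor
    · -- membership in E
      have hmem : mulPi ε x ∈ (mulPi ε) '' (chainPolytope r) := ⟨x, hx, rfl⟩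
      rw [chainPolytope, LinearMap.image_convexHull] at hmem
      have hsub : (mulPi ε) '' {x : Fin n → ℝ | (∀ i, x i = 0 ∨ x i = 1) ∧
          IsAntichainIn r {i | x i ≠ 0}} ⊆ signedAntichainVectors r := by
        rintro y ⟨v, ⟨hv01, hvA⟩, rfl⟩
        constructor
        · intro i
          rcases hv01 i with h | h <;> rcases hε i with h' | h' <;>
            simp [mulPi, h, h']
        · refine hvA.subset ?_
          intro i hi
          simp only [Set.mem_setOf_eq, mulPi, LinearMap.coe_mk, AddHom.coe_mk] at hi ⊢
          intro h; exact hi (by simp [h])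
      exact convexHull_mono hsub hmem
    · -- orthant
      intro i
      have : ε i * (ε i * x i) = x i := by
        rw [← mul_assoc, hεsq i, one_mul]
      rw [this]
      exact chainPolytope_nonneg hx i
  · -- InjOn
    intro x _ x' _ h
    funext i
    have := congrFun h i
    exact mul_left_cancel₀ (hεne i) this
  · -- SurjOn
    rintro y ⟨hyE, hyO⟩
    refine ⟨fun i => ε i * y i, ?_, ?_⟩
    · obtain ⟨z, hz, hdom⟩ := exists_dominating hyE
      refine chainPolytope_downclosed hz (fun i => hyO i) (fun i => ?_)
      calc ε i * y i ≤ |ε i * y i| := le_abs_self _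
        _ = |y i| := by rw [abs_mul]; rcases hε i with h | h <;> simp [h]
        _ ≤ z i := hdom i
    · funext i
      simp only
      rw [← mul_assoc, hεsq i, one_mul]
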